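/- arXiv:1203.1935 — 4 statements merged into one kernel-verified Lean document; each statement's English description precedes it below -/
import Mathlib

section
/- For every real number ξ not in 2πℤ and every natural number n ≥ 1, the tail series ∑_{k=n}^∞ e^{ikξ}/k converges and satisfies |∑_{k=n}^∞ e^{ikξ}/k| ≤ 1/(n |sin(ξ/2)|). -/
open Filter Topology Finset

private lemma telescope_Icc {K : Type*} [Field K] [CharZero K]
    (a b : ℕ) (hab : a ≤ b) :
    ∑ j ∈ Finset.Icc a b, ((1:K)/j - 1/(j+1)) = 1/a - 1/(b+1) := by
  induction b with
  | zero =>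
    interval_cases a
    simp
  | succ b ih =>
    rcases Nat.lt_or_ge b a with h | h
    · have : a = b + 1 := by omega
      subst this
      simp
    · rw [Finset.sum_Icc_succ_top (by omega), ih h]
      push_cast
      ring

private lemma abel_bound (z : ℂ) (M : ℝ)
    (hG : ∀ a b : ℕ, ‖∑ k ∈ Finset.Icc a b, z ^ k‖ ≤ M)
    (a b : ℕ) (ha : 1 ≤ a) :
    ‖∑ k ∈ Finset.Icc a b, z ^ k / k‖ ≤ M / a := by
  have hM0 : 0 ≤ M := le_trans (norm_nonneg _) (hG 1 0)
  rcases Nat.lt_or_ge b a with hab | hab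
  · rw [Finset.Icc_eq_empty_of_lt hab]
    simp only [Finset.sum_empty, norm_zero]
    positivity
  have hid : ∑ k ∈ Finset.Icc a b, z ^ k / k
      = (∑ k ∈ Finset.Icc a b, z ^ k) / ((b : ℂ) + 1)
        + ∑ j ∈ Finset.Icc a b, ((1/(j:ℂ) - 1/((j:ℂ)+1)) * ∑ k ∈ Finset.Icc a j, z ^ k) := by
    have h1 : ∀ k ∈ Finset.Icc a b, z ^ k / k
        = z ^ k / ((b:ℂ)+1) + ∑ j ∈ Finset.Icc k b, (z ^ k * (1/(j:ℂ) - 1/((j:ℂ)+1))) := by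
      intro k hk
      simp only [Finset.mem_Icc] at hk
      rw [← Finset.mul_sum, telescope_Icc k b hk.2]
      ring
    rw [Finset.sum_congr rfl h1, Finset.sum_add_distrib]
    congr 1
    · rw [← Finset.sum_div]
    · have comm := Finset.sum_Ico_Ico_comm a (b+1)
        (fun i j => z ^ i * (1/(j:ℂ) - 1/((j:ℂ)+1)))
      simp only [Finset.Ico_add_one_right_eq_Icc] at comm
      rw [comm]
      refine Finset.sum_congr rfl fun j hj => ?_
      rw [← Finset.sum_mul, mul_comm]
  rw [hid]
  have hb1 : ‖(∑ k ∈ Finset.Icc a b, z ^ k) / ((b:ℂ)+1)‖ ≤ M / ((b:ℝ)+1) := by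
    rw [norm_div]
    have : ‖((b:ℂ)+1)‖ = (b:ℝ)+1 := by
      rw [show ((b:ℂ)+1) = ((b+1 : ℕ) : ℂ) by push_cast; ring, Complex.norm_natCast]
      push_cast; ring
    rw [this]
    gcongr
    exact hG a b
  have hb2 : ‖∑ j ∈ Finset.Icc a b, ((1/(j:ℂ) - 1/((j:ℂ)+1)) * ∑ k ∈ Finset.Icc a j, z ^ k)‖
      ≤ ((1:ℝ)/a - 1/((b:ℝ)+1)) * M := by
    calc ‖∑ j ∈ Finset.Icc a b, ((1/(j:ℂ) - 1/((j:ℂ)+1)) * ∑ k ∈ Finset.Icc a j, z ^ k)‖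
        ≤ ∑ j ∈ Finset.Icc a b, (((1:ℝ)/j - 1/((j:ℝ)+1)) * M) := by
          refine norm_sum_le_of_le _ fun j hj => ?_
          simp only [Finset.mem_Icc] at hj
          rw [norm_mul]
          have hj1 : 1 ≤ j := le_trans ha hj.1
          have hnn : (0:ℝ) ≤ 1/(j:ℝ) - 1/((j:ℝ)+1) := by
            have : (1:ℝ) ≤ (j:ℝ) := by exact_mod_cast hj1
            have h2 : (0:ℝ) < (j:ℝ) := by linarith
            rw [sub_nonneg]
            gcongr
            linarith
          have : ‖(1/(j:ℂ) - 1/((j:ℂ)+1))‖ = (1:ℝ)/j - 1/((j:ℝ)+1) := by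
            rw [show (1/(j:ℂ) - 1/((j:ℂ)+1)) = (((1/(j:ℝ) - 1/((j:ℝ)+1)) : ℝ) : ℂ) by
              push_cast; ring, Complex.norm_real, Real.norm_eq_abs, abs_of_nonneg hnn]
          rw [this]
          exact mul_le_mul_of_nonneg_left (hG a j) hnn
      _ = ((1:ℝ)/a - 1/((b:ℝ)+1)) * M := by
          rw [← Finset.sum_mul, telescope_Icc a b hab]
  calc ‖(∑ k ∈ Finset.Icc a b, z ^ k) / ((b:ℂ)+1)
        + ∑ j ∈ Finset.Icc a b, ((1/(j:ℂ) - 1/((j:ℂ)+1)) * ∑ k ∈ Finset.Icc a j, z ^ k)‖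
      ≤ M / ((b:ℝ)+1) + ((1:ℝ)/a - 1/((b:ℝ)+1)) * M := by
        exact le_trans (norm_add_le _ _) (add_le_add hb1 hb2)
    _ = M / a := by ring

/-- For every real `ξ ∉ 2πℤ` and every `n ≥ 1`, the tail series `∑_{k=n}^∞ e^{ikξ}/k`
converges and its sum is bounded in modulus by `1/(n |sin(ξ/2)|)`. -/
theorem tail_exp_series_bound (ξ : ℝ) (hξ : ∀ m : ℤ, ξ ≠ 2 * Real.pi * m)
    (n : ℕ) (hn : 1 ≤ n) :
    ∃ S : ℂ,
      Tendsto (fun N : ℕ => ∑ k ∈ Finset.Icc n N, Complex.exp (Complex.I * k * ξ) / k)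
        atTop (𝓝 S) ∧
      ‖S‖ ≤ 1 / (n * |Real.sin (ξ / 2)|) := by
  set z : ℂ := Complex.exp (ξ * Complex.I) with hz_def
  have hz1 : z ≠ 1 := by
    rw [hz_def, ne_eq, Complex.exp_eq_one_iff]
    push_neg
    intro m hm
    apply hξ m
    have := congrArg Complex.im hm
    simpa [mul_comm] using this
  have hsin : Real.sin (ξ / 2) ≠ 0 := by
    intro h
    rw [Real.sin_eq_zero_iff] at h
    obtain ⟨m, hm⟩ := h
    exact hξ m (by linarith)
  have hsinpos : 0 < |Real.sin (ξ / 2)| := abs_pos.2 hsin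
  have habs : ‖z - 1‖ = 2 * |Real.sin (ξ / 2)| := by
    have e1 : z - 1 = Complex.exp ((ξ/2 : ℝ) * Complex.I)
        * (2 * Complex.I * Complex.sin ((ξ/2 : ℝ) : ℂ)) := by
      rw [Complex.sin, hz_def]
      rw [show ((ξ:ℂ) * Complex.I) = ((ξ/2:ℝ):ℂ)*Complex.I + ((ξ/2:ℝ):ℂ)*Complex.I by
        push_cast; ring]
      rw [Complex.exp_add, show (-(((ξ/2:ℝ):ℂ)) * Complex.I) = -((((ξ/2:ℝ):ℂ)) * Complex.I) by
        ring, Complex.exp_neg]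
      have hne := Complex.exp_ne_zero (((ξ/2:ℝ):ℂ) * Complex.I)
      field_simp
      ring_nf
      simp [Complex.I_sq]
    rw [e1, norm_mul,
      Complex.norm_exp_ofReal_mul_I, one_mul, norm_mul, norm_mul]
    rw [← Complex.ofReal_sin, Complex.norm_real, Real.norm_eq_abs]
    simp
  set M : ℝ := 1 / |Real.sin (ξ / 2)| with hM_def
  have hM0 : 0 < M := by positivity
  have hzk : ∀ k : ℕ, Complex.exp (Complex.I * k * ξ) = z ^ k := by
    intro k
    rw [hz_def, ← Complex.exp_nat_mul]
    congr 1
    ring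
  have hznorm : ∀ k : ℕ, ‖z ^ k‖ = 1 := by
    intro k
    rw [norm_pow, hz_def, Complex.norm_exp_ofReal_mul_I, one_pow]
  have hG : ∀ a b : ℕ, ‖∑ k ∈ Finset.Icc a b, z ^ k‖ ≤ M := by
    intro a b
    rcases Nat.lt_or_ge b a with hab | hab
    · rw [Finset.Icc_eq_empty_of_lt hab]
      simp only [Finset.sum_empty, norm_zero]
      positivity
    · rw [← Finset.Ico_add_one_right_eq_Icc, geom_sum_Ico hz1 (by omega), norm_div]
      rw [habs, hM_def, div_le_div_iff₀ (by linarith) hsinpos]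
      calc ‖z ^ (b+1) - z ^ a‖ * |Real.sin (ξ/2)|
          ≤ 2 * |Real.sin (ξ/2)| := by
            gcongr
            exact le_trans (norm_sub_le _ _) (by rw [hznorm, hznorm]; norm_num)
        _ = 1 * (2 * |Real.sin (ξ/2)|) := by ring
  have hkey : ∀ a b : ℕ, 1 ≤ a → ‖∑ k ∈ Finset.Icc a b, z ^ k / k‖ ≤ M / a :=
    fun a b ha => abel_bound z M hG a b ha
  set u : ℕ → ℂ := fun N => ∑ k ∈ Finset.Icc n N, z ^ k / k with hu_def
  obtain ⟨m, rfl⟩ : ∃ m, n = m + 1 := ⟨n - 1, by omega⟩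
  have hsplit : ∀ N1 N2 : ℕ, N1 ≤ N2 →
      u N2 - u N1 = ∑ k ∈ Finset.Icc (max (m+1) (N1+1)) N2, z ^ k / k := by
    intro N1 N2 h12
    rcases Nat.lt_or_ge N1 (m+1) with h | h
    · have h1 : Finset.Icc (m+1) N1 = ∅ := Finset.Icc_eq_empty_of_lt h
      have h2 : max (m+1) (N1+1) = m+1 := by omega
      rw [hu_def]
      simp only [h1, h2, Finset.sum_empty, sub_zero]
    · have h2 : max (m+1) (N1+1) = N1+1 := by omega
      rw [hu_def, h2]
      have := Finset.sum_Ioc_consecutive (fun k => z ^ k / (k:ℂ)) (by omega : m ≤ N1) h12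
      simp only [← Finset.Icc_add_one_left_eq_Ioc, Nat.succ_eq_add_one] at this
      show (∑ k ∈ Finset.Icc (m+1) N2, z ^ k / (k:ℂ))
        - (∑ k ∈ Finset.Icc (m+1) N1, z ^ k / (k:ℂ)) = ∑ k ∈ Finset.Icc (N1+1) N2, z ^ k / (k:ℂ)
      rw [← this]
      ring
  have hdist : ∀ N N1 N2 : ℕ, N ≤ N1 → N ≤ N2 →
      dist (u N1) (u N2) ≤ M / ((N:ℝ) + 1) := by
    have key : ∀ N N1 N2 : ℕ, N ≤ N1 → N1 ≤ N2 →
        dist (u N1) (u N2) ≤ M / ((N:ℝ) + 1) := by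
      intro N N1 N2 hN h12
      rw [dist_eq_norm, norm_sub_rev, hsplit N1 N2 h12]
      calc ‖∑ k ∈ Finset.Icc (max (m+1) (N1+1)) N2, z ^ k / k‖
          ≤ M / ((max (m+1) (N1+1) : ℕ) : ℝ) := hkey _ _ (by omega)
        _ ≤ M / ((N:ℝ) + 1) := by
            have hle : ((N:ℝ)+1) ≤ ((max (m+1) (N1+1) : ℕ):ℝ) := by
              exact_mod_cast Nat.cast_le.mpr (by omega : N+1 ≤ max (m+1) (N1+1))
            exact div_le_div_of_nonneg_left hM0.le (by positivity) hle
    intro N N1 N2 hN1 hN2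
    rcases le_total N1 N2 with h | h
    · exact key N N1 N2 hN1 h
    · rw [dist_comm]
      exact key N N2 N1 hN2 h
  have htends0 : Tendsto (fun N : ℕ => M / ((N:ℝ) + 1)) atTop (𝓝 0) := by
    have := tendsto_natCast_atTop_atTop (R := ℝ)
    apply Tendsto.div_atTop (tendsto_const_nhds (x := M))
    exact tendsto_atTop_add_const_right _ 1 this
  have hcauchy : CauchySeq u :=
    cauchySeq_of_le_tendsto_0 _ (fun n m N hn hm => hdist N n m hn hm) htends0
  obtain ⟨S, hS⟩ := cauchySeq_tendsto_of_complete hcauchy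
  refine ⟨S, ?_, ?_⟩
  · have : (fun N : ℕ => ∑ k ∈ Finset.Icc (m+1) N, Complex.exp (Complex.I * k * ξ) / k) = u := by
      funext N
      exact Finset.sum_congr rfl fun k _ => by rw [hzk]
    rw [this]
    exact hS
  · have hbound : ∀ N, ‖u N‖ ≤ M / ((m:ℝ)+1) := by
      intro N
      have := hkey (m+1) N (by omega)
      calc ‖u N‖ ≤ M / (((m+1 : ℕ)):ℝ) := this
        _ = M / ((m:ℝ)+1) := by push_cast; ring
    have hSnorm : ‖S‖ ≤ M / ((m:ℝ)+1) :=
      le_of_tendsto' (hS.norm) hbound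
    calc ‖S‖ ≤ M / ((m:ℝ)+1) := hSnorm
      _ = 1 / (((m+1:ℕ):ℝ) * |Real.sin (ξ / 2)|) := by
          rw [hM_def]
          push_cast
          field_simp
      _ = 1 / (((m+1:ℕ):ℝ) * |Real.sin (ξ / 2)|) := rfl
end

section
/- Let (B_n) be a sequence of invertible 2×2 complex matrices of the form B_n = I + (β/n)·G_n + R_n, where β > 0, G_n = [[cos(εn), sin(εn)], [sin(εn), −cos(εn)]] for a fixed ε ∈ (−2π, 2π) \ {0}, and ∑ ‖R_n‖ < ∞. Then for every f ∈ ℂ², the sequence x_n defined by x_1 = f, x_{n+1} = B_n x_n converges as n → ∞. -/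
open Filter Topology Matrix
open scoped Matrix.Norms.L2Operator

-- Abel summation bound
lemma abel_identity {E : Type*} [NormedAddCommGroup E] [NormedSpace ℝ E]
    (z : ℕ → E) (b : ℕ → ℝ) (n : ℕ) :
    ∀ m, n ≤ m → ∑ k ∈ Finset.Ico n m, b k • z k =
      ∑ k ∈ Finset.Ico n m, (b k - b (k+1)) • (∑ j ∈ Finset.Ico n (k+1), z j)
        + b m • (∑ j ∈ Finset.Ico n m, z j) := by
  intro m hm
  induction m, hm using Nat.le_induction with
  | base => simp
  | succ m hm ih =>
      rw [Finset.sum_Ico_succ_top hm, Finset.sum_Ico_succ_top hm, ih,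
        Finset.sum_Ico_succ_top hm z]
      simp only [sub_smul, smul_add]
      abel

lemma abel_bound_s10 {E : Type*} [NormedAddCommGroup E] [NormedSpace ℝ E]
    (z : ℕ → E) (b : ℕ → ℝ) (n : ℕ) (M : ℝ)
    (hb0 : ∀ k, n ≤ k → 0 ≤ b k) (hba : ∀ k, n ≤ k → b (k+1) ≤ b k)
    (hS : ∀ m, ‖∑ k ∈ Finset.Ico n m, z k‖ ≤ M) :
    ∀ m, ‖∑ k ∈ Finset.Ico n m, b k • z k‖ ≤ b n * M := by
  have hM : 0 ≤ M := le_trans (norm_nonneg _) (hS n)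
  intro m
  rcases le_or_gt n m with hm | hm
  · rw [abel_identity z b n m hm]
    have htel : ∑ k ∈ Finset.Ico n m, (b k - b (k+1)) = b n - b m := by
      induction m, hm using Nat.le_induction with
      | base => simp
      | succ m hm ih => rw [Finset.sum_Ico_succ_top hm, ih]; ring
    calc ‖∑ k ∈ Finset.Ico n m, (b k - b (k+1)) • (∑ j ∈ Finset.Ico n (k+1), z j)
        + b m • (∑ j ∈ Finset.Ico n m, z j)‖
        ≤ ∑ k ∈ Finset.Ico n m, ‖(b k - b (k+1)) • (∑ j ∈ Finset.Ico n (k+1), z j)‖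
          + ‖b m • (∑ j ∈ Finset.Ico n m, z j)‖ :=
          (norm_add_le _ _).trans (by gcongr; exact norm_sum_le _ _)
      _ ≤ ∑ k ∈ Finset.Ico n m, (b k - b (k+1)) * M + b m * M := by
          gcongr with k hk
          · rw [norm_smul, Real.norm_eq_abs, abs_of_nonneg
              (sub_nonneg.mpr (hba k (Finset.mem_Ico.mp hk).1))]
            exact mul_le_mul_of_nonneg_left (hS _)
              (sub_nonneg.mpr (hba k (Finset.mem_Ico.mp hk).1))
          · rw [norm_smul, Real.norm_eq_abs, abs_of_nonneg (hb0 m (le_trans hm le_rfl))]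
            exact mul_le_mul_of_nonneg_left (hS _) (hb0 m hm)
      _ = b n * M := by rw [← Finset.sum_mul, htel]; ring
  · rw [Finset.Ico_eq_empty (by omega), Finset.sum_empty, norm_zero]
    exact mul_nonneg (hb0 n le_rfl) hM

-- bounded solutions under summable perturbation
lemma bounded_of_step {V : Type*} [NormedAddCommGroup V]
    (y : ℕ → V) (c : ℕ → ℝ) (N : ℕ)
    (h : ∀ n, N ≤ n → ‖y (n+1)‖ ≤ (1 + c n) * ‖y n‖)
    (hc : ∀ n, 0 ≤ c n) (hsum : Summable c) :
    ∃ K, 0 ≤ K ∧ ∀ n, N ≤ n → ‖y n‖ ≤ K := by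
  refine ⟨‖y N‖ * Real.exp (∑' k, c k), by positivity, ?_⟩
  intro n hn
  have key : ∀ n, N ≤ n → ‖y n‖ ≤ ‖y N‖ * Real.exp (∑ k ∈ Finset.Ico N n, c k) := by
    intro n hn
    induction n, hn using Nat.le_induction with
    | base => simp
    | succ m hm ih =>
        calc ‖y (m+1)‖ ≤ (1 + c m) * ‖y m‖ := h m hm
          _ ≤ Real.exp (c m) * (‖y N‖ * Real.exp (∑ k ∈ Finset.Ico N m, c k)) := by
              have := Real.add_one_le_exp (c m)
              have h1 : (0:ℝ) ≤ 1 + c m := by linarith [hc m]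
              exact mul_le_mul (by linarith) ih (norm_nonneg _) (Real.exp_nonneg _)
          _ = ‖y N‖ * Real.exp (∑ k ∈ Finset.Ico N (m+1), c k) := by
              rw [Finset.sum_Ico_succ_top hm, Real.exp_add]; ring
  calc ‖y n‖ ≤ ‖y N‖ * Real.exp (∑ k ∈ Finset.Ico N n, c k) := key n hn
    _ ≤ ‖y N‖ * Real.exp (∑' k, c k) := by
        gcongr
        · exact Summable.sum_le_tsum _ (fun i _ => hc i) hsum

lemma converges_of_eventually_step {V : Type*} [NormedAddCommGroup V] [CompleteSpace V]
    (y v : ℕ → V) (N : ℕ)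
    (h : ∀ n, N ≤ n → y (n+1) = y n + v n) (hv : Summable v) :
    ∃ L, Tendsto y atTop (𝓝 L) := by
  obtain ⟨S, hS⟩ := hv
  have hps : Tendsto (fun n => ∑ k ∈ Finset.range n, v k) atTop (𝓝 S) :=
    hS.tendsto_sum_nat
  have key : ∀ n, N ≤ n → y n = y N + (∑ k ∈ Finset.range n, v k - ∑ k ∈ Finset.range N, v k) := by
    intro n hn
    induction n, hn using Nat.le_induction with
    | base => simp
    | succ m hm ih => rw [h m hm, ih, Finset.sum_range_succ]; abel
  refine ⟨y N + (S - ∑ k ∈ Finset.range N, v k), ?_⟩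
  have : Tendsto (fun n => y N + (∑ k ∈ Finset.range n, v k - ∑ k ∈ Finset.range N, v k))
      atTop (𝓝 (y N + (S - ∑ k ∈ Finset.range N, v k))) :=
    tendsto_const_nhds.add (hps.sub tendsto_const_nhds)
  exact this.congr' (by filter_upwards [eventually_ge_atTop N] with n hn using (key n hn).symm)

noncomputable def Qrot (ε : ℝ) : Matrix (Fin 2) (Fin 2) ℂ :=
  !![(Real.cos ε : ℂ), -(Real.sin ε : ℂ); (Real.sin ε : ℂ), (Real.cos ε : ℂ)]

noncomputable def sg : Matrix (Fin 2) (Fin 2) ℂ := !![1, 0; 0, -1]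

lemma Qrot_pow (ε : ℝ) (k : ℕ) : Qrot ε ^ k =
    !![(Real.cos (ε*k) : ℂ), -(Real.sin (ε*k) : ℂ);
       (Real.sin (ε*k) : ℂ), (Real.cos (ε*k) : ℂ)] := by
  induction k with
  | zero => simp [Matrix.one_fin_two]
  | succ k ih =>
      rw [pow_succ, ih, Qrot, Matrix.mul_fin_two]
      have h1 : ε * (k+1 : ℕ) = ε * k + ε := by push_cast; ring
      rw [h1, Real.cos_add, Real.sin_add]
      congr 1 <;> push_cast <;> ring

lemma Qrot_mem_unitary (ε : ℝ) : Qrot ε ∈ unitary (Matrix (Fin 2) (Fin 2) ℂ) := by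
  rw [Unitary.mem_iff]
  constructor <;>
  · ext i j
    fin_cases i <;> fin_cases j <;>
      simp [Qrot, Matrix.mul_apply, Fin.sum_univ_two, Matrix.conjTranspose_apply,
        Complex.conj_ofReal, Matrix.one_apply, ← Complex.ofReal_cos, ← Complex.ofReal_sin] <;>
      first
        | ring1
        | (norm_cast; linear_combination Real.sin_sq_add_cos_sq ε)

lemma sg_mem_unitary : sg ∈ unitary (Matrix (Fin 2) (Fin 2) ℂ) := by
  rw [Unitary.mem_iff]
  constructor <;>
  · ext i j
    fin_cases i <;> fin_cases j <;>
      simp [sg, Matrix.mul_apply, Fin.sum_univ_two, Matrix.conjTranspose_apply,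
        Matrix.one_apply]

lemma norm_Qrot_pow (ε : ℝ) (k : ℕ) : ‖Qrot ε ^ k‖ = 1 :=
  CStarRing.norm_of_mem_unitary (pow_mem (Qrot_mem_unitary ε) k)

lemma norm_sg : ‖sg‖ = 1 := CStarRing.norm_of_mem_unitary sg_mem_unitary

lemma Qpow_sg (ε : ℝ) (k : ℕ) : Qrot ε ^ k * sg =
    !![(Real.cos (ε*k) : ℂ), (Real.sin (ε*k) : ℂ);
       (Real.sin (ε*k) : ℂ), -(Real.cos (ε*k) : ℂ)] := by
  rw [Qrot_pow, sg, Matrix.mul_fin_two]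
  congr 1 <;> ring

lemma Qrot_sub_one_isUnit (ε : ℝ) (hε : Real.cos ε ≠ 1) :
    IsUnit (Qrot ε - 1) := by
  rw [Matrix.isUnit_iff_isUnit_det]
  have h : Qrot ε - 1 = !![(Real.cos ε : ℂ) - 1, -(Real.sin ε : ℂ);
      (Real.sin ε : ℂ), (Real.cos ε : ℂ) - 1] := by
    rw [Qrot, Matrix.one_fin_two]
    ext i j; fin_cases i <;> fin_cases j <;> simp
  rw [h, Matrix.det_fin_two_of, isUnit_iff_ne_zero]
  intro hcontra
  have h2 : ((Real.cos ε - 1)^2 + Real.sin ε ^2 : ℝ) = 0 := by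
    have := hcontra
    push_cast at this
    have : (((Real.cos ε - 1)^2 + Real.sin ε ^2 : ℝ) : ℂ) = 0 := by push_cast; linear_combination this
    exact_mod_cast this
  have hcc : Real.cos ε = 1 := by nlinarith [Real.sin_sq_add_cos_sq ε]
  exact hε hcc

lemma geom_block_bound (Q sg : Matrix (Fin 2) (Fin 2) ℂ) (u : (Matrix (Fin 2) (Fin 2) ℂ)ˣ)
    (hu : (u : Matrix (Fin 2) (Fin 2) ℂ) = Q - 1) (hQ : ∀ k : ℕ, ‖Q ^ k‖ = 1)
    (hsg : ‖sg‖ = 1) (n m : ℕ) :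
    ‖∑ k ∈ Finset.Ico n m, Q ^ k * sg‖ ≤ 2 * ‖((u⁻¹ : _ˣ) : Matrix (Fin 2) (Fin 2) ℂ)‖ := by
  set ui : Matrix (Fin 2) (Fin 2) ℂ := ((u⁻¹ : _ˣ) : Matrix (Fin 2) (Fin 2) ℂ) with hui
  rcases le_or_gt n m with hnm | hnm
  · have h2 : ∑ k ∈ Finset.Ico n m, Q ^ k * sg
        = Q ^ n * ((Q ^ (m - n) - 1) * ui) * sg := by
      rw [← Finset.sum_mul]
      congr 1
      have h2a : ∑ k ∈ Finset.Ico n m, Q ^ k = Q ^ n * ∑ k ∈ Finset.range (m - n), Q ^ k := by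
        rw [Finset.sum_Ico_eq_sum_range, Finset.mul_sum]
        exact Finset.sum_congr rfl fun k _ => (pow_add Q n k)
      have h3 : ∑ k ∈ Finset.range (m - n), Q ^ k = (Q ^ (m - n) - 1) * ui := by
        rw [hui, Units.eq_mul_inv_iff_mul_eq, hu]
        exact geom_sum_mul Q (m - n)
      rw [h2a, h3]
    have h4 : ‖Q ^ (m - n) - 1‖ ≤ 2 := by
      calc ‖Q ^ (m - n) - 1‖ ≤ ‖Q ^ (m - n)‖ + ‖(1 : Matrix (Fin 2) (Fin 2) ℂ)‖ :=
            norm_sub_le _ _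
        _ ≤ 1 + 1 := by
            rw [hQ (m - n)]
            have h1 := hQ 0
            rw [pow_zero] at h1
            simp [h1]
        _ = 2 := by norm_num
    rw [h2]
    calc ‖Q ^ n * ((Q ^ (m - n) - 1) * ui) * sg‖
        ≤ ‖Q ^ n * ((Q ^ (m - n) - 1) * ui)‖ * ‖sg‖ := norm_mul_le _ _
      _ ≤ (‖Q ^ n‖ * ‖(Q ^ (m - n) - 1) * ui‖) * ‖sg‖ :=
          mul_le_mul_of_nonneg_right (norm_mul_le _ _) (norm_nonneg _)
      _ ≤ (‖Q ^ n‖ * (‖Q ^ (m - n) - 1‖ * ‖ui‖)) * ‖sg‖ :=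
          mul_le_mul_of_nonneg_right
            (mul_le_mul_of_nonneg_left (norm_mul_le _ _) (norm_nonneg _)) (norm_nonneg _)
      _ = ‖Q ^ (m - n) - 1‖ * ‖ui‖ := by rw [hQ n, hsg]; ring
      _ ≤ 2 * ‖ui‖ := mul_le_mul_of_nonneg_right h4 (norm_nonneg _)
  · rw [Finset.Ico_eq_empty (by omega), Finset.sum_empty, norm_zero]
    exact mul_nonneg (by norm_num) (norm_nonneg _)


/-- Model system, `ε ≠ 0`: if `B_n = I + (β/n) G_n + R_n` with `β > 0`,
`G_n = [[cos(εn), sin(εn)],[sin(εn), -cos(εn)]]`, `ε ∈ (-2π, 2π) \ {0}`, `∑ ‖R_n‖ < ∞`,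
and all `B_n` are invertible, then every solution of `x_{n+1} = B_n x_n` converges. -/
theorem model_system_converges_eps_ne_zero (β ε : ℝ) (hβ : 0 < β)
    (hε : ε ∈ Set.Ioo (-(2 * Real.pi)) (2 * Real.pi)) (hε0 : ε ≠ 0)
    (R B : ℕ → Matrix (Fin 2) (Fin 2) ℂ) (hR : Summable fun n => ‖R n‖)
    (hB : ∀ n : ℕ, 1 ≤ n → B n = 1 +
      (((β / n : ℝ)) : ℂ) •
        !![(Real.cos (ε * n) : ℂ), (Real.sin (ε * n) : ℂ);
           (Real.sin (ε * n) : ℂ), -(Real.cos (ε * n) : ℂ)] + R n)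
    (hinv : ∀ n : ℕ, IsUnit (B n))
    (f : Fin 2 → ℂ) (x : ℕ → Fin 2 → ℂ)
    (hx1 : x 1 = f) (hx : ∀ n : ℕ, 1 ≤ n → x (n + 1) = B n *ᵥ x n) :
    ∃ L : Fin 2 → ℂ, Tendsto x atTop (𝓝 L) := by
  classical
  -- basic setup
  have hcos : Real.cos ε ≠ 1 := fun h =>
    hε0 ((Real.cos_eq_one_iff_of_lt_of_lt hε.1 hε.2).mp h)
  obtain ⟨u, hu⟩ := Qrot_sub_one_isUnit ε hcos
  set M : ℝ := 2 * ‖((u⁻¹ : _ˣ) : Matrix (Fin 2) (Fin 2) ℂ)‖ with hMdef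
  have hM0 : 0 ≤ M := mul_nonneg (by norm_num) (norm_nonneg _)
  have hgeom : ∀ n m : ℕ, ‖∑ k ∈ Finset.Ico n m, Qrot ε ^ k * sg‖ ≤ M :=
    fun n m => geom_block_bound (Qrot ε) sg u hu (norm_Qrot_pow ε) norm_sg n m
  set a : ℕ → Matrix (Fin 2) (Fin 2) ℂ :=
    fun k => (β / (k : ℝ)) • (Qrot ε ^ k * sg) with ha
  have hB' : ∀ n : ℕ, 1 ≤ n → B n = 1 + a n + R n := by
    intro n hn
    rw [hB n hn]
    congr 2
    show _ = (β / (n:ℝ)) • (Qrot ε ^ n * sg)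
    rw [Qpow_sg ε n, ← Complex.coe_algebraMap, algebraMap_smul]
  have hQsg_norm : ∀ k : ℕ, ‖Qrot ε ^ k * sg‖ ≤ 1 := by
    intro k
    calc ‖Qrot ε ^ k * sg‖ ≤ ‖Qrot ε ^ k‖ * ‖sg‖ := norm_mul_le _ _
      _ = 1 := by rw [norm_Qrot_pow, norm_sg, one_mul]
  have han : ∀ k : ℕ, ‖a k‖ ≤ β / (k : ℝ) := by
    intro k
    rw [ha]
    calc ‖(β / (k:ℝ)) • (Qrot ε ^ k * sg)‖ = |β / (k:ℝ)| * ‖Qrot ε ^ k * sg‖ := by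
          rw [norm_smul, Real.norm_eq_abs]
      _ ≤ (β / (k:ℝ)) * 1 := by
          rw [abs_of_nonneg (by positivity)]
          exact mul_le_mul_of_nonneg_left (hQsg_norm k) (by positivity)
      _ = β / (k:ℝ) := mul_one _
  have habel : ∀ n : ℕ, 1 ≤ n → ∀ m : ℕ,
      ‖∑ k ∈ Finset.Ico n m, a k‖ ≤ (β / (n:ℝ)) * M := by
    intro n hn
    refine abel_bound_s10 (fun k => Qrot ε ^ k * sg) (fun k => β / (k:ℝ)) n M
      (fun k _ => by positivity) ?_ (hgeom n)
    intro k hk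
    have hk1 : (1:ℝ) ≤ (k:ℝ) := by exact_mod_cast le_trans hn hk
    have hk2 : (k:ℝ) ≤ ((k:ℕ)+1 : ℝ) := by linarith
    have : (0:ℝ) < (k:ℝ) := by linarith
    apply div_le_div_of_nonneg_left hβ.le this
    push_cast
    linarith
  -- Cauchy sequences of partial tail sums
  have hcauchy : ∀ n : ℕ, 1 ≤ n →
      CauchySeq (fun m => ∑ k ∈ Finset.Ico n m, a k) := by
    intro n hn
    apply cauchySeq_of_le_tendsto_0 (fun N => (β / ((max N n : ℕ):ℝ)) * M)
    · intro m1 m2 N h1 h2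
      have hmain : ∀ m1 m2 : ℕ, N ≤ m1 → N ≤ m2 → m1 ≤ m2 →
          dist (∑ k ∈ Finset.Ico n m1, a k) (∑ k ∈ Finset.Ico n m2, a k)
            ≤ (β / ((max N n : ℕ):ℝ)) * M := by
        intro m1 m2 h1 h2 hmm
        have hmaxpos : (0:ℝ) < ((max N n : ℕ):ℝ) := by
          have : 1 ≤ max N n := le_trans hn (le_max_right _ _)
          exact_mod_cast this
        rcases le_or_gt m1 n with hc | hc
        · rcases le_or_gt m2 n with hc2 | hc2
          · rw [Finset.Ico_eq_empty (by omega), Finset.Ico_eq_empty (by omega)]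
            simp only [dist_self]
            positivity
          · rw [Finset.Ico_eq_empty (by omega : ¬ n < m1)]
            rw [dist_eq_norm, Finset.sum_empty, zero_sub, norm_neg]
            have hmax : max N n = n := max_eq_right (le_trans h1 hc)
            rw [hmax]
            exact habel n hn m2
        · have hsplit : ∑ k ∈ Finset.Ico n m1, a k + ∑ k ∈ Finset.Ico m1 m2, a k
              = ∑ k ∈ Finset.Ico n m2, a k := Finset.sum_Ico_consecutive _ hc.le hmm
          rw [dist_eq_norm, ← hsplit]
          simp only [add_sub_cancel_left, norm_neg, sub_add_cancel_left]
          calc ‖∑ k ∈ Finset.Ico m1 m2, a k‖ ≤ (β / (m1:ℝ)) * M :=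
                habel m1 (le_trans hn hc.le) m2
            _ ≤ (β / ((max N n : ℕ):ℝ)) * M := by
                apply mul_le_mul_of_nonneg_right _ hM0
                apply div_le_div_of_nonneg_left hβ.le hmaxpos
                exact_mod_cast max_le h1 hc.le
      rcases le_total m1 m2 with hmm | hmm
      · exact hmain m1 m2 h1 h2 hmm
      · rw [dist_comm]; exact hmain m2 m1 h2 h1 hmm
    · have h1 : Tendsto (fun N : ℕ => β / (N:ℝ) * M) atTop (𝓝 0) := by
        simpa using (tendsto_const_div_atTop_nhds_zero_nat β).mul_const M
      apply Tendsto.congr' _ h1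
      filter_upwards [eventually_ge_atTop n] with N hN
      rw [max_eq_left hN]
  set T : ℕ → Matrix (Fin 2) (Fin 2) ℂ :=
    fun n => limUnder atTop (fun m => ∑ k ∈ Finset.Ico n m, a k) with hT
  have hTl : ∀ n : ℕ, 1 ≤ n →
      Tendsto (fun m => ∑ k ∈ Finset.Ico n m, a k) atTop (𝓝 (T n)) :=
    fun n hn => (hcauchy n hn).tendsto_limUnder
  have hTb : ∀ n : ℕ, 1 ≤ n → ‖T n‖ ≤ (β / (n:ℝ)) * M := fun n hn =>
    le_of_tendsto (hTl n hn).norm (Eventually.of_forall (habel n hn))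
  have hTrec : ∀ n : ℕ, 1 ≤ n → T n = a n + T (n + 1) := by
    intro n hn
    refine tendsto_nhds_unique (hTl n hn) (Tendsto.congr' ?_
      (tendsto_const_nhds.add (hTl (n+1) (by omega))))
    filter_upwards [eventually_ge_atTop (n+1)] with m hm
    exact (Finset.sum_eq_sum_Ico_succ_bot (by omega) _).symm
  -- the summable error terms
  set E : ℕ → Matrix (Fin 2) (Fin 2) ℂ :=
    fun n => R n + T (n + 1) * (a n + R n) with hE
  have hEb : ∀ n : ℕ, 1 ≤ n →
      ‖E n‖ ≤ ‖R n‖ * (1 + β * M) + (β * β * M) / (n:ℝ)^2 := by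
    intro n hn
    have hn1 : (1:ℝ) ≤ (n:ℝ) := by exact_mod_cast hn
    have hnpos : (0:ℝ) < (n:ℝ) := by linarith
    have hTn : ‖T (n+1)‖ ≤ (β / (n:ℝ)) * M := by
      refine le_trans (hTb (n+1) (by omega)) ?_
      apply mul_le_mul_of_nonneg_right _ hM0
      apply div_le_div_of_nonneg_left hβ.le hnpos
      push_cast; linarith
    have hTn' : ‖T (n+1)‖ ≤ β * M := by
      refine le_trans hTn ?_
      apply mul_le_mul_of_nonneg_right _ hM0
      rw [div_le_iff₀ hnpos]
      nlinarith
    have h1 : ‖E n‖ ≤ ‖R n‖ + ‖T (n+1)‖ * (‖a n‖ + ‖R n‖) := by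
      rw [hE]
      refine le_trans (norm_add_le _ _) ?_
      refine add_le_add_right ?_ _
      refine le_trans (norm_mul_le _ _) ?_
      exact mul_le_mul_of_nonneg_left (norm_add_le _ _) (norm_nonneg _)
    have h2 : ‖T (n+1)‖ * ‖a n‖ ≤ (β * β * M) / (n:ℝ)^2 := by
      calc ‖T (n+1)‖ * ‖a n‖ ≤ ((β / (n:ℝ)) * M) * (β / (n:ℝ)) :=
            mul_le_mul hTn (han n) (norm_nonneg _) (by positivity)
        _ = (β * β * M) / (n:ℝ)^2 := by field_simp
    have h3 : ‖T (n+1)‖ * ‖R n‖ ≤ (β * M) * ‖R n‖ :=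
      mul_le_mul_of_nonneg_right hTn' (norm_nonneg _)
    nlinarith [mul_add (‖T (n+1)‖) (‖a n‖) (‖R n‖)]
  have hEsum : Summable fun n => ‖E n‖ := by
    apply Summable.of_norm_bounded_eventually_nat
      (g := fun n => ‖R n‖ * (1 + β * M) + (β * β * M) / (n:ℝ)^2)
    · refine Summable.add (hR.mul_right _) ?_
      have := (Real.summable_one_div_nat_pow (p := 2)).mpr (by norm_num)
      simpa [mul_one_div, div_eq_mul_inv] using this.mul_left (β * β * M)
    · filter_upwards [eventually_ge_atTop 1] with n hn
      rw [Real.norm_eq_abs, abs_of_nonneg (norm_nonneg _)]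
      exact hEb n hn
  -- key algebraic identity
  have hkey : ∀ n : ℕ, 1 ≤ n → (1 + T (n+1)) * B n = (1 + T n) + E n := by
    intro n hn
    rw [hB' n hn, hTrec n hn, hE]
    noncomm_ring
  -- move to Euclidean space
  set toE : (Fin 2 → ℂ) → EuclideanSpace ℂ (Fin 2) :=
    fun v => (EuclideanSpace.equiv (Fin 2) ℂ).symm v with htoE
  have haddE : ∀ U V : Fin 2 → ℂ, toE (U + V) = toE U + toE V := fun _ _ => rfl
  set X : ℕ → EuclideanSpace ℂ (Fin 2) := fun n => toE (x n) with hX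
  set y : ℕ → EuclideanSpace ℂ (Fin 2) := fun n => toE ((1 + T n) *ᵥ x n) with hy
  set v : ℕ → EuclideanSpace ℂ (Fin 2) := fun n => toE (E n *ᵥ x n) with hv
  have hyrec : ∀ n : ℕ, 1 ≤ n → y (n+1) = y n + v n := by
    intro n hn
    show toE ((1 + T (n+1)) *ᵥ x (n+1)) = toE ((1 + T n) *ᵥ x n) + toE (E n *ᵥ x n)
    rw [← haddE]
    congr 1
    rw [hx n hn, Matrix.mulVec_mulVec, hkey n hn, Matrix.add_mulVec]
  have hyx : ∀ n : ℕ, y n = X n + toE (T n *ᵥ x n) := by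
    intro n
    show toE ((1 + T n) *ᵥ x n) = toE (x n) + toE (T n *ᵥ x n)
    rw [← haddE]
    congr 1
    rw [Matrix.add_mulVec, Matrix.one_mulVec]
  have hvb : ∀ n : ℕ, ‖v n‖ ≤ ‖E n‖ * ‖X n‖ := fun n =>
    Matrix.l2_opNorm_mulVec (E n) (X n)
  have hTxb : ∀ n : ℕ, ‖toE (T n *ᵥ x n)‖ ≤ ‖T n‖ * ‖X n‖ := fun n =>
    Matrix.l2_opNorm_mulVec (T n) (X n)
  have hxb : ∀ n : ℕ, ‖X n‖ ≤ ‖y n‖ + ‖T n‖ * ‖X n‖ := by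
    intro n
    have h1 : X n = y n - toE (T n *ᵥ x n) := by rw [hyx n]; abel
    calc ‖X n‖ = ‖y n - toE (T n *ᵥ x n)‖ := by rw [← h1]
      _ ≤ ‖y n‖ + ‖toE (T n *ᵥ x n)‖ := norm_sub_le _ _
      _ ≤ ‖y n‖ + ‖T n‖ * ‖X n‖ := add_le_add_right (hTxb n) _
  -- choose N beyond which ‖T n‖ ≤ 1/2
  have hT0 : Tendsto (fun n : ℕ => (β / (n:ℝ)) * M) atTop (𝓝 0) := by
    simpa using (tendsto_const_div_atTop_nhds_zero_nat β).mul_const M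
  obtain ⟨N0, hN0⟩ := (eventually_atTop).mp
    (hT0.eventually_lt_const (by norm_num : (0:ℝ) < 1/2))
  set N : ℕ := max N0 1 with hN
  have hN1 : 1 ≤ N := le_max_right _ _
  have hThalf : ∀ n : ℕ, N ≤ n → ‖T n‖ ≤ 1/2 := by
    intro n hn
    exact le_trans (hTb n (le_trans hN1 hn))
      (le_of_lt (hN0 n (le_trans (le_max_left _ _) hn)))
  have hxy2 : ∀ n : ℕ, N ≤ n → ‖X n‖ ≤ 2 * ‖y n‖ := by
    intro n hn
    have h1 := hxb n
    have h2 : ‖T n‖ * ‖X n‖ ≤ (1/2) * ‖X n‖ :=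
      mul_le_mul_of_nonneg_right (hThalf n hn) (norm_nonneg _)
    linarith
  have hystep : ∀ n : ℕ, N ≤ n → ‖y (n+1)‖ ≤ (1 + 2 * ‖E n‖) * ‖y n‖ := by
    intro n hn
    have hn1 : 1 ≤ n := le_trans hN1 hn
    rw [hyrec n hn1]
    calc ‖y n + v n‖ ≤ ‖y n‖ + ‖v n‖ := norm_add_le _ _
      _ ≤ ‖y n‖ + ‖E n‖ * ‖X n‖ := add_le_add_right (hvb n) _
      _ ≤ ‖y n‖ + ‖E n‖ * (2 * ‖y n‖) := by
          refine add_le_add_right ?_ _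
          exact mul_le_mul_of_nonneg_left (hxy2 n hn) (norm_nonneg _)
      _ = (1 + 2 * ‖E n‖) * ‖y n‖ := by ring
  obtain ⟨K, hK0, hK⟩ := bounded_of_step y (fun n => 2 * ‖E n‖) N hystep
    (fun n => by positivity) (hEsum.mul_left 2)
  have hXK : ∀ n : ℕ, N ≤ n → ‖X n‖ ≤ 2 * K := by
    intro n hn
    calc ‖X n‖ ≤ 2 * ‖y n‖ := hxy2 n hn
      _ ≤ 2 * K := by linarith [hK n hn]
  have hvsum : Summable v := by
    apply Summable.of_norm_bounded_eventually_nat (g := fun n => ‖E n‖ * (2 * K))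
    · exact hEsum.mul_right _
    · filter_upwards [eventually_ge_atTop N] with n hn
      calc ‖v n‖ ≤ ‖E n‖ * ‖X n‖ := hvb n
        _ ≤ ‖E n‖ * (2 * K) :=
            mul_le_mul_of_nonneg_left (hXK n hn) (norm_nonneg _)
  obtain ⟨Ly, hLy⟩ := converges_of_eventually_step y v N
    (fun n hn => hyrec n (le_trans hN1 hn)) hvsum
  -- the correction term tends to zero
  have hTx0 : Tendsto (fun n : ℕ => toE (T n *ᵥ x n)) atTop (𝓝 0) := by
    apply squeeze_zero_norm' (a := fun n : ℕ => ((β / (n:ℝ)) * M) * (2 * K))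
    · filter_upwards [eventually_ge_atTop N] with n hn
      calc ‖toE (T n *ᵥ x n)‖ ≤ ‖T n‖ * ‖X n‖ := hTxb n
        _ ≤ ((β / (n:ℝ)) * M) * (2 * K) :=
            mul_le_mul (hTb n (le_trans hN1 hn)) (hXK n hn) (norm_nonneg _)
              (by positivity)
    · simpa using hT0.mul_const (2 * K)
  have hXlim : Tendsto X atTop (𝓝 Ly) := by
    have h1 : Tendsto (fun n => y n - toE (T n *ᵥ x n)) atTop (𝓝 (Ly - 0)) :=
      hLy.sub hTx0
    rw [sub_zero] at h1
    apply h1.congr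
    intro n
    rw [hyx n]; abel
  exact ⟨_, ((EuclideanSpace.equiv (Fin 2) ℂ).continuous.tendsto Ly).comp hXlim⟩
end

section
/- Let B_n = I + (β/n)·[[1, 0], [0, −1]] + R_n with β > 0 and ∑ ‖R_n‖ < ∞, and assume each B_n is invertible. Let x_1 = f and x_{n+1} = B_n x_n. Then the limit L(f) := lim_{n→∞} x_n / n^β exists for every f ∈ ℂ², and the linear map f ↦ L(f) has rank at most one. -/
open Filter Topology Matrix
open scoped Matrix.Norms.L2Operator

-- entry bound by L2 operator norm, via finite-dimensionality
lemma entry_bdd (i j : Fin 2) : ∃ K : ℝ, 0 ≤ K ∧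
    ∀ A : Matrix (Fin 2) (Fin 2) ℂ, ‖A i j‖ ≤ K * ‖A‖ := by
  let φ : Matrix (Fin 2) (Fin 2) ℂ →ₗ[ℂ] ℂ :=
    { toFun := fun A => A i j
      map_add' := fun _ _ => rfl
      map_smul' := fun _ _ => rfl }
  let ψ := LinearMap.toContinuousLinearMap φ
  exact ⟨‖ψ‖, ψ.opNorm_nonneg, fun A => ψ.le_opNorm A⟩

lemma aux_a_tendsto (β : ℝ) (hβ : 0 < β) :
    ∃ c : ℝ, 0 < c ∧ Tendsto (fun n : ℕ => ((n : ℝ) ^ β)⁻¹ *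
      ∏ k ∈ Finset.Ico 1 n, (1 + β / k)) atTop (𝓝 c) := by
  set a : ℕ → ℝ := fun n => ∏ k ∈ Finset.Ico 1 n, (1 + β / k) with ha_def
  have ha_pos : ∀ n, 0 < a n := by
    intro n
    refine Finset.prod_pos fun k hk => ?_
    have : (0:ℝ) ≤ β / k := div_nonneg hβ.le (Nat.cast_nonneg k)
    linarith
  -- key identity : a (n+1) * n! = ∏_{k ∈ Ico 1 (n+1)} (β + k)
  have hkey : ∀ n : ℕ, a (n+1) * ((Nat.factorial n) : ℝ) = ∏ k ∈ Finset.Ico 1 (n+1), (β + k) := by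
    intro n
    induction n with
    | zero => simp [ha_def]
    | succ n ih =>
      have h1 : a (n+2) = a (n+1) * (1 + β / ((n+1 : ℕ) : ℝ)) := by
        simp only [ha_def]
        exact Finset.prod_Ico_succ_top (by omega) _
      have h2 : ((Nat.factorial (n+1)) : ℝ) = ((Nat.factorial n) : ℝ) * (n+1) := by
        rw [Nat.factorial_succ]; push_cast; ring
      have h3 : (1 + β / (n+1 : ℕ)) * ((n:ℝ)+1) = β + ((n+1 : ℕ) : ℝ) := by
        have : ((n+1 : ℕ) : ℝ) ≠ 0 := by positivity
        push_cast at this ⊢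
        field_simp
        ring
      rw [h1, h2, Finset.prod_Ico_succ_top (a := 1) (b := n+1) (by omega), ← ih]
      push_cast
      push_cast at h3
      linear_combination (a (n+1) * ((Nat.factorial n : ℕ) : ℝ)) * h3
  -- GammaSeq β n = n^β / (β * a (n+1))
  have hGS : ∀ n : ℕ, Real.GammaSeq β n = (n:ℝ)^β / (β * a (n+1)) := by
    intro n
    rw [Real.GammaSeq]
    have hrange : ∏ j ∈ Finset.range (n + 1), (β + j) = β * ∏ k ∈ Finset.Ico 1 (n+1), (β + k) := by
      rw [Finset.range_eq_Ico, ← Finset.prod_Ico_consecutive _ (Nat.zero_le 1) (by omega)]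
      norm_num
    rw [hrange, ← hkey]
    have hf : ((Nat.factorial n) : ℝ) ≠ 0 := by positivity
    field_simp
  have hΓpos : 0 < Real.Gamma β := Real.Gamma_pos_of_pos hβ
  have hβΓ : (0:ℝ) < β * Real.Gamma β := by positivity
  refine ⟨(β * Real.Gamma β)⁻¹, by positivity, ?_⟩
  -- first : ((n)^β)⁻¹ * a (n+1) → (β Γ β)⁻¹
  have h1 : Tendsto (fun n : ℕ => ((n:ℝ)^β)⁻¹ * a (n+1)) atTop (𝓝 (β * Real.Gamma β)⁻¹) := by
    have := (Real.GammaSeq_tendsto_Gamma β).const_mul β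
    have h2 : Tendsto (fun n : ℕ => (β * Real.GammaSeq β n)⁻¹) atTop (𝓝 (β * Real.Gamma β)⁻¹) :=
      this.inv₀ (ne_of_gt hβΓ)
    refine h2.congr' ?_
    filter_upwards [eventually_ge_atTop 1] with n hn
    have hnpos : (0:ℝ) < (n:ℝ)^β := by
      apply Real.rpow_pos_of_pos
      exact_mod_cast Nat.pos_of_ne_zero (by omega)
    rw [hGS]
    field_simp
  -- correction factor (n/(n+1))^β → 1
  have hratio : Tendsto (fun n : ℕ => ((n:ℝ)/((n:ℝ)+1))^β) atTop (𝓝 1) := by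
    have h0 : Tendsto (fun n : ℕ => (n:ℝ)/((n:ℝ)+1)) atTop (𝓝 1) := by
      simpa using tendsto_natCast_div_add_atTop (1:ℝ)
    have hc : ContinuousAt (fun u : ℝ => u ^ β) 1 :=
      Real.continuousAt_rpow_const 1 β (Or.inl one_ne_zero)
    have := hc.tendsto.comp h0
    rwa [Real.one_rpow] at this
  rw [← tendsto_add_atTop_iff_nat 1]
  have := h1.mul hratio
  rw [mul_one] at this
  refine this.congr' ?_
  filter_upwards [eventually_ge_atTop 1] with n hn
  have hn0 : (0:ℝ) < (n:ℝ) := by exact_mod_cast Nat.pos_of_ne_zero (by omega)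
  have hn1 : (0:ℝ) < (n:ℝ) + 1 := by linarith
  have hd : ((n:ℝ)/((n:ℝ)+1))^β = (n:ℝ)^β / ((n:ℝ)+1)^β := Real.div_rpow hn0.le hn1.le β
  have hpow : (((n+1 : ℕ)):ℝ)^β = ((n:ℝ)+1)^β := by norm_num
  rw [hd, hpow]
  have h2 : (0:ℝ) < (n:ℝ)^β := Real.rpow_pos_of_pos hn0 β
  have h3 : (0:ℝ) < ((n:ℝ)+1)^β := Real.rpow_pos_of_pos hn1 β
  field_simp
  rfl

lemma aux_prod_mu_tendsto (β : ℝ) (hβ : 0 < β) (m : ℕ) (hm : β < m) :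
    Tendsto (fun n : ℕ => ∏ k ∈ Finset.Ico m n, ((1 - β/k)/(1 + β/k))) atTop (𝓝 0) := by
  set μ : ℕ → ℝ := fun k => (1 - β/k)/(1 + β/k) with hμ_def
  have hk_facts : ∀ k : ℕ, m ≤ k → 0 < (k:ℝ) ∧ β < (k:ℝ) := by
    intro k hk
    have h1 : β < (k:ℝ) := lt_of_lt_of_le hm (by exact_mod_cast hk)
    exact ⟨lt_trans hβ h1, h1⟩
  have hμ_nonneg : ∀ k : ℕ, m ≤ k → 0 ≤ μ k := by
    intro k hk
    obtain ⟨hk0, hkβ⟩ := hk_facts k hk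
    have h1 : β / k < 1 := (div_lt_one hk0).mpr hkβ
    have h2 : (0:ℝ) < 1 + β/k := by positivity
    apply div_nonneg (by linarith) h2.le
  have hμ_le : ∀ k : ℕ, m ≤ k → μ k ≤ Real.exp (-(2*β/((k:ℝ)+β))) := by
    intro k hk
    obtain ⟨hk0, hkβ⟩ := hk_facts k hk
    have h2 : (0:ℝ) < 1 + β/k := by positivity
    have h3 : (0:ℝ) < (k:ℝ) + β := by positivity
    have hid : μ k = 1 - 2*β/((k:ℝ)+β) := by
      rw [hμ_def]
      field_simp
      ring
    rw [hid]
    have := Real.add_one_le_exp (-(2*β/((k:ℝ)+β)))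
    linarith
  -- sum S n → ∞
  have hS : Tendsto (fun n : ℕ => ∑ k ∈ Finset.Ico m n, 2*β/((k:ℝ)+β)) atTop atTop := by
    set C : ℝ := 2*β/(1+β) with hC_def
    have hC : 0 < C := by positivity
    have hH := Real.tendsto_sum_range_one_div_nat_succ_atTop
    set H : ℕ → ℝ := fun n => ∑ i ∈ Finset.range n, (1 / (i + 1) : ℝ) with hH_def
    have hlow : ∀ n : ℕ, m ≤ n → C * (H n - H m) ≤ ∑ k ∈ Finset.Ico m n, 2*β/((k:ℝ)+β) := by
      intro n hn
      have hsplit : H n - H m = ∑ k ∈ Finset.Ico m n, (1 / ((k:ℝ) + 1)) := by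
        rw [hH_def]
        rw [Finset.sum_Ico_eq_sub _ hn]
      rw [hsplit, Finset.mul_sum]
      apply Finset.sum_le_sum
      intro k hk
      have hk0 : (0:ℝ) ≤ (k:ℝ) := Nat.cast_nonneg k
      have h1 : (0:ℝ) < (k:ℝ) + 1 := by linarith
      have h2 : (0:ℝ) < (k:ℝ) + β := by positivity
      rw [hC_def]
      rw [div_mul_div_comm, mul_one]
      apply div_le_div_of_nonneg_left (by positivity) h2
      nlinarith
    have hT : Tendsto (fun n : ℕ => C * (H n - H m)) atTop atTop := by
      apply Tendsto.const_mul_atTop hC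
      exact tendsto_atTop_add_const_right atTop (-(H m)) hH
    apply tendsto_atTop_mono' _ _ hT
    filter_upwards [eventually_ge_atTop m] with n hn using hlow n hn
  have hexp : Tendsto (fun n : ℕ => Real.exp (-(∑ k ∈ Finset.Ico m n, 2*β/((k:ℝ)+β)))) atTop (𝓝 0) := by
    simp only [Real.exp_neg]
    exact (Real.tendsto_exp_atTop.comp hS).inv_tendsto_atTop
  apply tendsto_of_tendsto_of_tendsto_of_le_of_le' tendsto_const_nhds hexp
  · exact Eventually.of_forall fun n => Finset.prod_nonneg fun k hk => hμ_nonneg k (Finset.mem_Ico.mp hk).1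
  · apply Eventually.of_forall
    intro n
    calc ∏ k ∈ Finset.Ico m n, μ k
        ≤ ∏ k ∈ Finset.Ico m n, Real.exp (-(2*β/((k:ℝ)+β))) := by
          apply Finset.prod_le_prod
          · intro k hk; exact hμ_nonneg k (Finset.mem_Ico.mp hk).1
          · intro k hk; exact hμ_le k (Finset.mem_Ico.mp hk).1
      _ = Real.exp (-(∑ k ∈ Finset.Ico m n, 2*β/((k:ℝ)+β))) := by
          rw [← Real.exp_sum, ← Finset.sum_neg_distrib]

set_option maxHeartbeats 1000000 in
lemma aux_main (β : ℝ) (hβ : 0 < β)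
    (R B : ℕ → Matrix (Fin 2) (Fin 2) ℂ) (hR : Summable fun n => ‖R n‖)
    (hB : ∀ n : ℕ, 1 ≤ n → B n = 1 + (((β / n : ℝ)) : ℂ) • !![1, 0; 0, -1] + R n)
    (x : (Fin 2 → ℂ) → ℕ → Fin 2 → ℂ)
    (hx1 : ∀ f, x f 1 = f)
    (hx : ∀ f, ∀ n : ℕ, 1 ≤ n → x f (n + 1) = B n *ᵥ x f n)
    (f : Fin 2 → ℂ) :
    ∃ z : Fin 2 → ℂ, z 1 = 0 ∧
      Tendsto (fun n : ℕ => ((n : ℝ) ^ β)⁻¹ • x f n) atTop (𝓝 z) := by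
  classical
  -- entrywise summable bound
  set t : ℕ → ℝ := fun n => ∑ i : Fin 2, ∑ j : Fin 2, ‖R n i j‖ with ht_def
  have ht0 : ∀ n, 0 ≤ t n := fun n =>
    Finset.sum_nonneg fun i _ => Finset.sum_nonneg fun j _ => norm_nonneg _
  have htsum : Summable t := by
    apply summable_sum
    intro i _
    apply summable_sum
    intro j _
    obtain ⟨K, hK0, hKb⟩ := entry_bdd i j
    exact Summable.of_nonneg_of_le (fun n => norm_nonneg _) (fun n => hKb (R n)) (hR.mul_left K)
  have hrow : ∀ n (i : Fin 2), ‖R n i 0‖ + ‖R n i 1‖ ≤ t n := by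
    intro n i
    have h2 : ∑ j : Fin 2, ‖R n i j‖ ≤ t n :=
      Finset.single_le_sum (f := fun i => ∑ j : Fin 2, ‖R n i j‖)
        (fun i _ => Finset.sum_nonneg fun j _ => norm_nonneg _) (Finset.mem_univ i)
    simpa [Fin.sum_univ_two] using h2
  -- the normalizing product
  set a : ℕ → ℝ := fun n => ∏ k ∈ Finset.Ico 1 n, (1 + β / k) with ha_def
  have ha_pos : ∀ n, 0 < a n := by
    intro n
    refine Finset.prod_pos fun k hk => ?_
    have : (0:ℝ) ≤ β / k := div_nonneg hβ.le (Nat.cast_nonneg k)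
    linarith
  have ha1 : a 1 = 1 := by simp [ha_def]
  have hb_pos : ∀ n : ℕ, 1 ≤ n → 0 < 1 + β/(n:ℝ) := by
    intro n hn
    have : (0:ℝ) < β / n := div_pos hβ (by exact_mod_cast hn)
    linarith
  have ha_succ : ∀ n : ℕ, 1 ≤ n → a (n+1) = a n * (1 + β/(n:ℝ)) := by
    intro n hn
    simp only [ha_def]
    exact Finset.prod_Ico_succ_top hn _
  set y : ℕ → Fin 2 → ℂ := fun n => (a n)⁻¹ • x f n with hy_def
  set μ : ℕ → ℝ := fun k => (1 - β/k)/(1 + β/k) with hμ_def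
  set e : ℕ → Fin 2 → ℂ := fun n => ((a n / a (n+1) : ℝ)) • (R n *ᵥ y n) with he_def
  have hxy : ∀ n, x f n = (a n) • y n := by
    intro n
    rw [hy_def]
    rw [smul_smul, mul_inv_cancel₀ (ha_pos n).ne', one_smul]
  -- component recurrences for x
  have hcomp : ∀ n : ℕ, 1 ≤ n →
      x f (n+1) 0 = (1 + ((β/n : ℝ) : ℂ)) * x f n 0 + (R n *ᵥ x f n) 0 ∧
      x f (n+1) 1 = (1 - ((β/n : ℝ) : ℂ)) * x f n 1 + (R n *ᵥ x f n) 1 := by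
    intro n hn
    rw [hx f n hn, hB n hn]
    constructor <;>
    · simp [Matrix.add_mulVec, Matrix.smul_mulVec, Matrix.one_mulVec,
        Matrix.mulVec, dotProduct, Fin.sum_univ_two]
      ring
  -- recurrences for y
  have hy0 : ∀ n : ℕ, 1 ≤ n → y (n+1) 0 = y n 0 + e n 0 := by
    intro n hn
    have h1 := (hcomp n hn).1
    have han : (a n) ≠ 0 := (ha_pos n).ne'
    have han1 : (a (n+1)) ≠ 0 := (ha_pos (n+1)).ne'
    have hbn : (1 + β/(n:ℝ)) ≠ 0 := (hb_pos n hn).ne'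
    have hrec := ha_succ n hn
    have hmv : (R n *ᵥ x f n) = (a n : ℝ) • (R n *ᵥ y n) := by
      rw [hxy n, Matrix.mulVec_smul]
    simp only [hy_def, he_def, Pi.smul_apply, Complex.real_smul]
    rw [h1, hmv]
    simp only [Pi.smul_apply, Complex.real_smul, hrec]
    push_cast
    have hanC : ((a n : ℝ) : ℂ) ≠ 0 := by exact_mod_cast han
    have hbnC : ((1:ℂ) + (β:ℂ)/((n:ℕ):ℂ)) ≠ 0 := by
      have h := hbn
      have h2 : (((1 + β/(n:ℝ)) : ℝ) : ℂ) ≠ 0 := by exact_mod_cast h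
      push_cast at h2
      exact h2
    field_simp
    ring_nf; rfl
  have hy1 : ∀ n : ℕ, 1 ≤ n → y (n+1) 1 = ((μ n : ℝ) : ℂ) * y n 1 + e n 1 := by
    intro n hn
    have h1 := (hcomp n hn).2
    have han : (a n) ≠ 0 := (ha_pos n).ne'
    have han1 : (a (n+1)) ≠ 0 := (ha_pos (n+1)).ne'
    have hbn : (1 + β/(n:ℝ)) ≠ 0 := (hb_pos n hn).ne'
    have hrec := ha_succ n hn
    have hmv : (R n *ᵥ x f n) = (a n : ℝ) • (R n *ᵥ y n) := by
      rw [hxy n, Matrix.mulVec_smul]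
    simp only [hy_def, he_def, hμ_def, Pi.smul_apply, Complex.real_smul]
    rw [h1, hmv]
    simp only [Pi.smul_apply, Complex.real_smul, hrec]
    push_cast
    have hanC : ((a n : ℝ) : ℂ) ≠ 0 := by exact_mod_cast han
    have hbnC : ((1:ℂ) + (β:ℂ)/((n:ℕ):ℂ)) ≠ 0 := by
      have h2 : (((1 + β/(n:ℝ)) : ℝ) : ℂ) ≠ 0 := by exact_mod_cast hbn
      push_cast at h2
      exact h2
    field_simp
    ring_nf; rfl
  -- norm bound on the perturbation
  have he_bound : ∀ n : ℕ, 1 ≤ n → ∀ i : Fin 2, ‖e n i‖ ≤ t n * ‖y n‖ := by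
    intro n hn i
    have hdiv : |a n / a (n+1)| ≤ 1 := by
      rw [abs_of_pos (div_pos (ha_pos n) (ha_pos (n+1)))]
      rw [div_le_one (ha_pos (n+1))]
      rw [ha_succ n hn]
      nlinarith [ha_pos n, hb_pos n hn, div_pos hβ (show (0:ℝ) < n by exact_mod_cast hn)]
    have hmv : (R n *ᵥ y n) i = R n i 0 * y n 0 + R n i 1 * y n 1 := by
      simp [Matrix.mulVec, dotProduct, Fin.sum_univ_two]
    have h2 : ‖(R n *ᵥ y n) i‖ ≤ t n * ‖y n‖ := by
      rw [hmv]
      calc ‖R n i 0 * y n 0 + R n i 1 * y n 1‖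
          ≤ ‖R n i 0‖ * ‖y n 0‖ + ‖R n i 1‖ * ‖y n 1‖ := by
            refine (norm_add_le _ _).trans ?_
            simp [norm_mul]
        _ ≤ ‖R n i 0‖ * ‖y n‖ + ‖R n i 1‖ * ‖y n‖ := by
            gcongr
            · exact norm_le_pi_norm (y n) 0
            · exact norm_le_pi_norm (y n) 1
        _ = (‖R n i 0‖ + ‖R n i 1‖) * ‖y n‖ := by ring
        _ ≤ t n * ‖y n‖ := mul_le_mul_of_nonneg_right (hrow n i) (norm_nonneg _)
    have h3 : ‖e n i‖ = |a n / a (n+1)| * ‖(R n *ᵥ y n) i‖ := by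
      simp only [he_def, Pi.smul_apply, Complex.real_smul, norm_mul, Complex.norm_real,
        Real.norm_eq_abs]
    rw [h3]
    calc |a n / a (n+1)| * ‖(R n *ᵥ y n) i‖ ≤ 1 * ‖(R n *ᵥ y n) i‖ :=
          mul_le_mul_of_nonneg_right hdiv (norm_nonneg _)
      _ = ‖(R n *ᵥ y n) i‖ := one_mul _
      _ ≤ t n * ‖y n‖ := h2
  -- |μ| ≤ 1
  have hμabs : ∀ n : ℕ, 1 ≤ n → |μ n| ≤ 1 := by
    intro n hn
    have hb := hb_pos n hn
    have hd : (0:ℝ) ≤ β / n := div_nonneg hβ.le (Nat.cast_nonneg n)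
    rw [hμ_def, abs_div, abs_of_pos hb, div_le_one hb]
    rw [abs_le]
    constructor <;> linarith
  -- one-step norm bound
  have hstep : ∀ n : ℕ, 1 ≤ n → ‖y (n+1)‖ ≤ (1 + t n) * ‖y n‖ := by
    intro n hn
    have hnn : 0 ≤ (1 + t n) * ‖y n‖ :=
      mul_nonneg (by linarith [ht0 n]) (norm_nonneg _)
    rw [pi_norm_le_iff_of_nonneg hnn]
    intro i
    match i with
    | 0 =>
      rw [hy0 n hn]
      calc ‖y n 0 + e n 0‖ ≤ ‖y n 0‖ + ‖e n 0‖ := norm_add_le _ _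
        _ ≤ ‖y n‖ + t n * ‖y n‖ := by
            gcongr
            · exact norm_le_pi_norm (y n) 0
            · exact he_bound n hn 0
        _ = (1 + t n) * ‖y n‖ := by ring
    | 1 =>
      rw [hy1 n hn]
      calc ‖((μ n : ℝ) : ℂ) * y n 1 + e n 1‖ ≤ ‖((μ n : ℝ) : ℂ)‖ * ‖y n 1‖ + ‖e n 1‖ := by
            refine (norm_add_le _ _).trans ?_
            simp [norm_mul]
        _ ≤ 1 * ‖y n‖ + t n * ‖y n‖ := by
            refine add_le_add ?_ (he_bound n hn 1)
            have h4 : ‖((μ n : ℝ) : ℂ)‖ = |μ n| := by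
              simp [Complex.norm_real, Real.norm_eq_abs]
            rw [h4]
            exact mul_le_mul (hμabs n hn) (norm_le_pi_norm (y n) 1) (norm_nonneg _) zero_le_one
        _ = (1 + t n) * ‖y n‖ := by ring
  -- global bound
  set T : ℝ := ∑' k, t k with hT_def
  have hT0 : 0 ≤ T := tsum_nonneg ht0
  set M : ℝ := ‖f‖ * Real.exp T with hM_def
  have hM0 : 0 ≤ M := mul_nonneg (norm_nonneg f) (Real.exp_pos T).le
  have hy1f : y 1 = f := by
    simp only [hy_def]
    rw [ha1, hx1]
    simp
  have hbound : ∀ n : ℕ, 1 ≤ n → ‖y n‖ ≤ M := by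
    have key : ∀ n : ℕ, 1 ≤ n →
        ‖y n‖ ≤ ‖f‖ * Real.exp (∑ k ∈ Finset.Ico 1 n, t k) := by
      intro n hn
      induction n, hn using Nat.le_induction with
      | base => simp [hy1f]
      | succ n hn ih =>
        rw [Finset.sum_Ico_succ_top hn, Real.exp_add]
        calc ‖y (n+1)‖ ≤ (1 + t n) * ‖y n‖ := hstep n hn
          _ ≤ Real.exp (t n) * (‖f‖ * Real.exp (∑ k ∈ Finset.Ico 1 n, t k)) := by
              apply mul_le_mul _ ih (norm_nonneg _) (Real.exp_pos _).le
              linarith [Real.add_one_le_exp (t n)]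
          _ = ‖f‖ * (Real.exp (∑ k ∈ Finset.Ico 1 n, t k) * Real.exp (t n)) := by ring
    intro n hn
    refine (key n hn).trans ?_
    rw [hM_def]
    gcongr
    exact Summable.sum_le_tsum _ (fun k _ => ht0 k) htsum
  have he_boundM : ∀ n : ℕ, 1 ≤ n → ∀ i : Fin 2, ‖e n i‖ ≤ t n * M := by
    intro n hn i
    exact (he_bound n hn i).trans (mul_le_mul_of_nonneg_left (hbound n hn) (ht0 n))
  -- component 0 converges
  have htsumM : Summable (fun k => t k * M) := htsum.mul_right M
  have htsumM1 : Summable (fun k : ℕ => t (k+1) * M) := by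
    have h5 := (summable_nat_add_iff (f := fun k => t k * M) 1).mpr htsumM
    simpa using h5
  have hsum0 : Summable (fun k => e (k+1) 0) :=
    Summable.of_norm_bounded htsumM1 (fun k => he_boundM (k+1) (by omega) 0)
  have hpart : ∀ n : ℕ, y (n+1) 0 = f 0 + ∑ k ∈ Finset.range n, e (k+1) 0 := by
    intro n
    induction n with
    | zero => simp [hy1f]
    | succ n ih =>
      rw [Finset.sum_range_succ, hy0 (n+1) (by omega), ih]
      ring
  have h0conv : Tendsto (fun n => y n 0) atTop (𝓝 (f 0 + ∑' k, e (k+1) 0)) := by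
    rw [← tendsto_add_atTop_iff_nat 1]
    have h2 : Tendsto (fun n => f 0 + ∑ k ∈ Finset.range n, e (k+1) 0) atTop
        (𝓝 (f 0 + ∑' k, e (k+1) 0)) :=
      tendsto_const_nhds.add hsum0.hasSum.tendsto_sum_nat
    exact h2.congr fun n => (hpart n).symm
  -- component 1 tends to zero
  have h1conv : Tendsto (fun n => y n 1) atTop (𝓝 (0:ℂ)) := by
    rw [NormedAddCommGroup.tendsto_nhds_zero]
    intro ε hε
    have hε3 : (0:ℝ) < ε/3 := by linarith
    have htail : Tendsto (fun m : ℕ => ∑' k, (t (k+m) * M)) atTop (𝓝 0) :=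
      tendsto_sum_nat_add (fun k => t k * M)
    obtain ⟨m, hmge, hmtail⟩ : ∃ m : ℕ, (max 1 (⌈β⌉₊ + 1)) ≤ m ∧
        ∑' k, (t (k+m) * M) < ε/3 := by
      have h6 : ∀ᶠ m : ℕ in atTop, ∑' k, (t (k+m) * M) < ε/3 :=
        htail.eventually (gt_mem_nhds hε3)
      obtain ⟨m, h7, h8⟩ := (h6.and (eventually_ge_atTop (max 1 (⌈β⌉₊ + 1)))).exists
      exact ⟨m, h8, h7⟩
    have hm1 : 1 ≤ m := le_trans (le_max_left _ _) hmge
    have hmβ : β < m := by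
      have h9 : (⌈β⌉₊ + 1 : ℕ) ≤ m := le_trans (le_max_right _ _) hmge
      have h10 : β ≤ (⌈β⌉₊ : ℝ) := Nat.le_ceil β
      have h11 : ((⌈β⌉₊ + 1 : ℕ) : ℝ) ≤ (m:ℝ) := by exact_mod_cast h9
      push_cast at h11
      linarith
    -- tail sums of e are small
    have htailsum : ∀ n : ℕ, ∑ k ∈ Finset.Ico m n, ‖e k 1‖ ≤ ε/3 := by
      intro n
      rcases le_or_gt m n with hnm | hnm
      · have hsummm : Summable (fun k : ℕ => t (k+m) * M) := by
          have h5 := (summable_nat_add_iff (f := fun k => t k * M) m).mpr htsumM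
          simpa using h5
        calc ∑ k ∈ Finset.Ico m n, ‖e k 1‖
            ≤ ∑ k ∈ Finset.Ico m n, t k * M := by
              refine Finset.sum_le_sum fun k hk => ?_
              exact he_boundM k (le_trans hm1 (Finset.mem_Ico.mp hk).1) 1
          _ = ∑ k ∈ Finset.range (n - m), t (m + k) * M := by
              rw [Finset.sum_Ico_eq_sum_range]
          _ = ∑ k ∈ Finset.range (n - m), t (k + m) * M := by
              refine Finset.sum_congr rfl fun k _ => by rw [add_comm]
          _ ≤ ∑' k, (t (k+m) * M) := by
              refine Summable.sum_le_tsum _ (fun k _ => ?_) hsummm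
              exact mul_nonneg (ht0 _) hM0
          _ ≤ ε/3 := hmtail.le
      · rw [Finset.Ico_eq_empty (by omega)]
        simpa using hε3.le
    -- positivity facts about μ on [m, ∞)
    have hμ_nonneg : ∀ k : ℕ, m ≤ k → 0 ≤ μ k := by
      intro k hk
      have hk0 : (0:ℝ) < k := by
        have : (1:ℕ) ≤ k := le_trans hm1 hk
        exact_mod_cast this
      have hkβ : β < k := lt_of_lt_of_le hmβ (by exact_mod_cast hk)
      have h1 : β / k < 1 := (div_lt_one hk0).mpr hkβ
      have h2 : (0:ℝ) < 1 + β/k := by positivity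
      rw [hμ_def]
      exact div_nonneg (by linarith) h2.le
    have hμ_le_one : ∀ k : ℕ, m ≤ k → μ k ≤ 1 := by
      intro k hk
      have h12 := hμabs k (le_trans hm1 hk)
      exact (abs_le.mp h12).2
    -- key induction inequality
    have hkey : ∀ n : ℕ, m ≤ n → ‖y n 1‖ ≤
        (∏ k ∈ Finset.Ico m n, μ k) * M + ∑ k ∈ Finset.Ico m n, ‖e k 1‖ := by
      intro n hn
      induction n, hn using Nat.le_induction with
      | base =>
        simp only [Finset.Ico_self, Finset.prod_empty, Finset.sum_empty, one_mul, add_zero]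
        exact (norm_le_pi_norm (y m) 1).trans (hbound m hm1)
      | succ n hn ih =>
        have hn1 : 1 ≤ n := le_trans hm1 hn
        have hP0 : 0 ≤ ∏ k ∈ Finset.Ico m n, μ k :=
          Finset.prod_nonneg fun k hk => hμ_nonneg k (Finset.mem_Ico.mp hk).1
        have hS0 : 0 ≤ ∑ k ∈ Finset.Ico m n, ‖e k 1‖ :=
          Finset.sum_nonneg fun k _ => norm_nonneg _
        have hμn0 := hμ_nonneg n hn
        have hμn1 := hμ_le_one n hn
        rw [Finset.prod_Ico_succ_top hn, Finset.sum_Ico_succ_top hn, hy1 n hn1]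
        calc ‖((μ n : ℝ) : ℂ) * y n 1 + e n 1‖
            ≤ μ n * ‖y n 1‖ + ‖e n 1‖ := by
              refine (norm_add_le _ _).trans ?_
              gcongr
              rw [norm_mul]
              have h13 : ‖((μ n : ℝ) : ℂ)‖ = μ n := by
                rw [Complex.norm_real, Real.norm_eq_abs, abs_of_nonneg hμn0]
              rw [h13]
          _ ≤ μ n * ((∏ k ∈ Finset.Ico m n, μ k) * M + ∑ k ∈ Finset.Ico m n, ‖e k 1‖)
              + ‖e n 1‖ := by gcongr
          _ ≤ (∏ k ∈ Finset.Ico m n, μ k) * μ n * M + (∑ k ∈ Finset.Ico m n, ‖e k 1‖ + ‖e n 1‖) := by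
              nlinarith [norm_nonneg (e n 1)]
    -- product factor eventually small
    have hP := aux_prod_mu_tendsto β hβ m hmβ
    have hPev : ∀ᶠ n in atTop, (∏ k ∈ Finset.Ico m n, ((1 - β/(k:ℝ))/(1 + β/(k:ℝ)))) < ε/(3*(M+1)) :=
      hP.eventually (gt_mem_nhds (by positivity))
    filter_upwards [hPev, eventually_ge_atTop m] with n hPn hn
    have h14 := hkey n hn
    have hPn' : (∏ k ∈ Finset.Ico m n, μ k) < ε/(3*(M+1)) := by
      simpa [hμ_def] using hPn
    have hP0 : 0 ≤ ∏ k ∈ Finset.Ico m n, μ k :=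
      Finset.prod_nonneg fun k hk => hμ_nonneg k (Finset.mem_Ico.mp hk).1
    have h15 : (∏ k ∈ Finset.Ico m n, μ k) * M < ε/3 := by
      have hMM : (0:ℝ) < M + 1 := by linarith
      have h16 : (∏ k ∈ Finset.Ico m n, μ k) * M ≤ (∏ k ∈ Finset.Ico m n, μ k) * (M+1) :=
        mul_le_mul_of_nonneg_left (by linarith) hP0
      have h17 : (∏ k ∈ Finset.Ico m n, μ k) * (M+1) < (ε/(3*(M+1))) * (M+1) :=
        mul_lt_mul_of_pos_right hPn' hMM
      have h18 : (ε/(3*(M+1))) * (M+1) = ε/3 := by field_simp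
      linarith
    have h19 := htailsum n
    calc ‖y n 1‖ ≤ (∏ k ∈ Finset.Ico m n, μ k) * M + ∑ k ∈ Finset.Ico m n, ‖e k 1‖ := h14
      _ < ε/3 + ε/3 := by linarith
      _ < ε := by linarith
  -- assemble the vector limit
  set ℓ : ℂ := f 0 + ∑' k, e (k+1) 0 with hℓ_def
  have hyconv : Tendsto y atTop (𝓝 ![ℓ, 0]) := by
    rw [tendsto_pi_nhds]
    intro i
    match i with
    | 0 => simpa using h0conv
    | 1 => simpa using h1conv
  obtain ⟨c, hc0, hc⟩ := aux_a_tendsto β hβ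
  refine ⟨c • ![ℓ, 0], by simp, ?_⟩
  have hfinal := hc.smul hyconv
  refine hfinal.congr' ?_
  filter_upwards with n
  show (((n:ℝ) ^ β)⁻¹ * a n) • y n = ((n:ℝ) ^ β)⁻¹ • x f n
  simp only [hy_def]
  rw [smul_smul]
  congr 1
  have han := (ha_pos n).ne'
  field_simp

/-- Model system, `ε = 0` (diagonalized): with `B_n = I + (β/n) diag(1,-1) + R_n`, `β > 0`,
`∑ ‖R_n‖ < ∞`, all `B_n` invertible, the limit `L f = lim x_n(f)/n^β` exists for every
initial condition `f` and `f ↦ L f` is a linear map of rank at most one. -/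
theorem model_system_eps_zero_rank_one (β : ℝ) (hβ : 0 < β)
    (R B : ℕ → Matrix (Fin 2) (Fin 2) ℂ) (hR : Summable fun n => ‖R n‖)
    (hB : ∀ n : ℕ, 1 ≤ n → B n = 1 + (((β / n : ℝ)) : ℂ) • !![1, 0; 0, -1] + R n)
    (hinv : ∀ n : ℕ, IsUnit (B n))
    (x : (Fin 2 → ℂ) → ℕ → Fin 2 → ℂ)
    (hx1 : ∀ f, x f 1 = f)
    (hx : ∀ f, ∀ n : ℕ, 1 ≤ n → x f (n + 1) = B n *ᵥ x f n) :
    ∃ L : (Fin 2 → ℂ) →ₗ[ℂ] (Fin 2 → ℂ),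
      (∀ f, Tendsto (fun n : ℕ => ((n : ℝ) ^ β)⁻¹ • x f n) atTop (𝓝 (L f))) ∧
      ∃ v : Fin 2 → ℂ, ∀ f, ∃ c : ℂ, L f = c • v := by
  classical
  have main := fun f => aux_main β hβ R B hR hB x hx1 hx f
  choose z hz1 hz using main
  have hadd : ∀ f g, z (f + g) = z f + z g := by
    intro f g
    have hseq : ∀ n : ℕ, 1 ≤ n → x (f + g) n = x f n + x g n := by
      intro n hn
      induction n, hn using Nat.le_induction with
      | base => simp [hx1]
      | succ n hn ih => rw [hx _ n hn, hx _ n hn, hx _ n hn, ih, Matrix.mulVec_add]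
    refine tendsto_nhds_unique (hz (f+g)) ?_
    have h2 : Tendsto (fun n : ℕ => ((n:ℝ)^β)⁻¹ • x f n + ((n:ℝ)^β)⁻¹ • x g n) atTop
        (𝓝 (z f + z g)) := (hz f).add (hz g)
    refine h2.congr' ?_
    filter_upwards [eventually_ge_atTop 1] with n hn
    rw [hseq n hn, smul_add]
  have hsmul : ∀ (c : ℂ) (f : Fin 2 → ℂ), z (c • f) = c • z f := by
    intro c f
    have hseq : ∀ n : ℕ, 1 ≤ n → x (c • f) n = c • x f n := by
      intro n hn
      induction n, hn using Nat.le_induction with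
      | base => simp [hx1]
      | succ n hn ih => rw [hx _ n hn, hx _ n hn, ih, Matrix.mulVec_smul]
    refine tendsto_nhds_unique (hz (c • f)) ?_
    have h2 : Tendsto (fun n : ℕ => c • (((n:ℝ)^β)⁻¹ • x f n)) atTop
        (𝓝 (c • z f)) := (hz f).const_smul c
    refine h2.congr' ?_
    filter_upwards [eventually_ge_atTop 1] with n hn
    rw [hseq n hn, smul_comm]
  refine ⟨{ toFun := z, map_add' := hadd, map_smul' := hsmul }, hz, ![1, 0], ?_⟩
  intro f
  refine ⟨z f 0, ?_⟩
  show z f = z f 0 • ![1, 0]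
  funext i
  match i with
  | 0 => simp
  | 1 => simp [hz1 f]
end

section
/- Let β > 0 and consider the scalar recursion x_{n+1} = (1 + β/n + r_n) x_n with x_1 = 1, where (r_n) are complex numbers with ∑ |r_n| < ∞ and 1 + β/n + r_n ≠ 0 for all n. Then lim_{n→∞} x_n / n^β exists. -/
open Filter Topology

/-- Scalar model recursion: if `x_1 = 1`, `x_{n+1} = (1 + β/n + r_n) x_n` with `β > 0`,
`∑ |r_n| < ∞` and no factor vanishing, then `x_n / n^β` converges. -/
theorem scalar_recursion_limit (β : ℝ) (hβ : 0 < β) (r : ℕ → ℂ)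
    (hr : Summable fun n => ‖r n‖)
    (hne : ∀ n : ℕ, 1 ≤ n → (1 + (β / n : ℝ) + r n : ℂ) ≠ 0)
    (x : ℕ → ℂ) (hx1 : x 1 = 1)
    (hx : ∀ n : ℕ, 1 ≤ n → x (n + 1) = (1 + ((β / n : ℝ) : ℂ) + r n) * x n) :
    ∃ L : ℂ, Tendsto (fun n : ℕ => x n / ((n : ℝ) ^ β : ℝ)) atTop (𝓝 L) := by
  -- positivity facts
  have hc : ∀ k : ℕ, (0:ℝ) < 1 + β / k := fun k => by positivity
  have hcC : ∀ k : ℕ, ((1 + β / k : ℝ) : ℂ) ≠ 0 :=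
    fun k => Complex.ofReal_ne_zero.mpr (hc k).ne'
  -- the perturbation factors
  set s : ℕ → ℂ := fun k => r k / ((1 + β / k : ℝ) : ℂ) with hs_def
  have hfact : ∀ k : ℕ, ((1 + β / k : ℝ) : ℂ) * (1 + s k) = 1 + ((β / k : ℝ) : ℂ) + r k := by
    intro k
    have h1 : ((1 + β / k : ℝ) : ℂ) * (1 + s k) = ((1 + β / k : ℝ) : ℂ) + r k := by
      rw [mul_add, mul_one, hs_def, mul_div_cancel₀ _ (hcC k)]
    rw [h1]
    push_cast
    ring
  have hs_le : ∀ k : ℕ, ‖s k‖ ≤ ‖r k‖ := by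
    intro k
    rw [hs_def]
    simp only [norm_div]
    rw [Complex.norm_real]
    rw [Real.norm_of_nonneg (hc k).le]
    exact div_le_self (norm_nonneg _) (le_add_of_nonneg_right (by positivity) : (1:ℝ) ≤ 1 + β / k)
  have hsum : Summable fun k => ‖s k‖ :=
    hr.of_nonneg_of_le (fun _ => norm_nonneg _) hs_le
  have hs0 : Tendsto (fun k => ‖s k‖) atTop (𝓝 0) := hsum.tendsto_atTop_zero
  -- shifted factor sequence
  set F : ℕ → ℂ := fun k => 1 + s (1 + k) with hF_def
  have hFne : ∀ k : ℕ, F k ≠ 0 := by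
    intro k
    have h1 := hfact (1+k)
    intro h0
    rw [hF_def] at h0
    simp only at h0
    rw [h0, mul_zero] at h1
    exact hne (1+k) (Nat.le_add_right 1 k) h1.symm
  -- summability of logs, hence multipliable
  have hlog : Summable fun k => Complex.log (F k) := by
    have hb : ∀ᶠ k in atTop, ‖Complex.log (F k)‖ ≤ (3/2) * ‖s (1 + k)‖ := by
      have : Tendsto (fun k => ‖s (1 + k)‖) atTop (𝓝 0) :=
        hs0.comp (tendsto_add_atTop_nat 1 |>.congr (fun n => by rw [add_comm]))
      filter_upwards [this.eventually (eventually_le_nhds (by norm_num : (0:ℝ) < 1/2))] with k hk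
      exact Complex.norm_log_one_add_half_le_self hk
    exact Summable.of_norm_bounded_eventually_nat (((summable_nat_add_iff 1).mpr hsum).congr
      (fun k => by rw [add_comm]) |>.mul_left (3/2)) hb
  have hM : Multipliable F := by
    have := Complex.multipliable_of_summable_log hlog
    exact this
  have hProd : Tendsto (fun n => ∏ k ∈ Finset.range n, F k) atTop (𝓝 (∏' k, F k)) :=
    hM.hasProd.tendsto_prod_nat
  -- product formula for x
  have hxf : ∀ n : ℕ, 1 ≤ n → x n =
      ((∏ k ∈ Finset.Ico 1 n, (1 + β / k : ℝ) : ℝ) : ℂ) * ∏ k ∈ Finset.Ico 1 n, (1 + s k) := by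
    intro n hn
    induction n, hn using Nat.le_induction with
    | base => simp [hx1]
    | succ n hn ih =>
      rw [hx n hn, ih, Finset.prod_Ico_succ_top hn, Finset.prod_Ico_succ_top hn, ← hfact n]
      push_cast
      ring
  -- Gamma asymptotics for the main product
  have hGpos : 0 < β * Real.Gamma β := mul_pos hβ (Real.Gamma_pos_of_pos hβ)
  have hg_eq : ∀ n : ℕ, 1 ≤ n →
      (∏ k ∈ Finset.Ico 1 (n+1), (1 + β / k : ℝ)) / (n:ℝ) ^ β = (β * Real.GammaSeq β n)⁻¹ := by
    intro n hn
    have hnp : (0:ℝ) < n := by exact_mod_cast hn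
    have hQ : (0:ℝ) < ∏ k ∈ Finset.Ico 1 (n+1), (β + k) :=
      Finset.prod_pos (fun k hk => by positivity)
    have hfac : (0:ℝ) < (n.factorial : ℝ) := by exact_mod_cast n.factorial_pos
    have h1 : ∏ j ∈ Finset.range (n+1), (β + j) = β * ∏ k ∈ Finset.Ico 1 (n+1), (β + k) := by
      rw [Finset.prod_range_succ', Finset.prod_Ico_eq_prod_range]
      simp [mul_comm, Nat.add_comm]
    have h2 : ∏ k ∈ Finset.Ico 1 (n+1), (k:ℝ) = (n.factorial : ℝ) := by
      have := congrArg (Nat.cast (R := ℝ)) (Finset.prod_Ico_id_eq_factorial n)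
      push_cast at this
      exact this
    have h3 : ∏ k ∈ Finset.Ico 1 (n+1), (1 + β / k : ℝ)
        = (∏ k ∈ Finset.Ico 1 (n+1), (β + k)) / (n.factorial : ℝ) := by
      rw [← h2, ← Finset.prod_div_distrib]
      refine Finset.prod_congr rfl fun k hk => ?_
      have hk0 : (0:ℝ) < k := by exact_mod_cast (Finset.mem_Ico.mp hk).1
      field_simp
      ring
    have hnβ : (0:ℝ) < (n:ℝ) ^ β := Real.rpow_pos_of_pos hnp β
    rw [h3, Real.GammaSeq, h1]
    field_simp
  have hGlim : Tendsto (fun n : ℕ => (β * Real.GammaSeq β n)⁻¹) atTop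
      (𝓝 ((β * Real.Gamma β)⁻¹)) :=
    (tendsto_const_nhds.mul (Real.GammaSeq_tendsto_Gamma β)).inv₀ hGpos.ne'
  have hratio : Tendsto (fun n : ℕ => ((n:ℝ) / ((n:ℝ)+1)) ^ β) atTop (𝓝 1) := by
    have h1 : Tendsto (fun n : ℕ => (n:ℝ) / ((n:ℝ)+1)) atTop (𝓝 1) := by
      have h2 : Tendsto (fun n : ℕ => 1 - 1 / ((n:ℝ)+1)) atTop (𝓝 (1 - 0)) :=
        tendsto_const_nhds.sub tendsto_one_div_add_atTop_nhds_zero_nat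
      rw [sub_zero] at h2
      refine h2.congr fun n => ?_
      have hne1 : ((n:ℝ)+1) ≠ 0 := by positivity
      field_simp
      ring
    have hc : ContinuousAt (fun y : ℝ => y ^ β) 1 :=
      Real.continuousAt_rpow_const 1 β (Or.inl one_ne_zero)
    have := hc.tendsto.comp h1
    simpa [Real.one_rpow, Function.comp_def] using this
  -- assemble
  refine ⟨(((β * Real.Gamma β)⁻¹ : ℝ) : ℂ) * ∏' k, F k, ?_⟩
  rw [← tendsto_add_atTop_iff_nat 1]
  have t1 : Tendsto (fun n : ℕ =>
      ((((∏ k ∈ Finset.Ico 1 (n+1), (1 + β / k : ℝ)) / (n:ℝ) ^ β) : ℝ) : ℂ)) atTop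
      (𝓝 (((β * Real.Gamma β)⁻¹ : ℝ) : ℂ)) := by
    apply (Complex.continuous_ofReal.tendsto _).comp
    apply hGlim.congr'
    filter_upwards [eventually_ge_atTop 1] with n hn
    exact (hg_eq n hn).symm
  have t2 : Tendsto (fun n : ℕ => ((((n:ℝ)/((n:ℝ)+1)) ^ β : ℝ) : ℂ)) atTop (𝓝 (1:ℂ)) := by
    have := (Complex.continuous_ofReal.tendsto _).comp hratio
    simpa [Function.comp_def] using this
  have key := (t1.mul t2).mul hProd
  rw [mul_one] at key
  refine key.congr' ?_
  filter_upwards [eventually_ge_atTop 1] with n hn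
  have hn0 : (0:ℝ) < (n:ℝ) := by exact_mod_cast hn
  have hnb : (0:ℝ) < (n:ℝ) ^ β := Real.rpow_pos_of_pos hn0 β
  have hn1b : (0:ℝ) < ((n:ℝ)+1) ^ β := Real.rpow_pos_of_pos (by positivity) β
  have hBP : ∏ k ∈ Finset.Ico 1 (n+1), (1 + s k) = ∏ k ∈ Finset.range n, F k := by
    rw [Finset.prod_Ico_eq_prod_range]
    simp [hF_def]
  have hre : (∏ k ∈ Finset.Ico 1 (n+1), (1 + β / k : ℝ)) / (n:ℝ) ^ β * ((n:ℝ)/((n:ℝ)+1)) ^ β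
      = (∏ k ∈ Finset.Ico 1 (n+1), (1 + β / k : ℝ)) / (((n+1:ℕ):ℝ)) ^ β := by
    rw [Real.div_rpow hn0.le (by positivity)]
    push_cast
    field_simp
  calc ((((∏ k ∈ Finset.Ico 1 (n+1), (1 + β / k : ℝ)) / (n:ℝ) ^ β) : ℝ) : ℂ)
        * ((((n:ℝ)/((n:ℝ)+1)) ^ β : ℝ) : ℂ) * ∏ k ∈ Finset.range n, F k
      = (((((∏ k ∈ Finset.Ico 1 (n+1), (1 + β / k : ℝ))) / (((n+1:ℕ):ℝ)) ^ β) : ℝ) : ℂ)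
        * ∏ k ∈ Finset.range n, F k := by
        rw [← Complex.ofReal_mul, hre]
    _ = x (n+1) / (((((n+1:ℕ):ℝ)) ^ β : ℝ) : ℂ) := by
        rw [hxf (n+1) (by omega), hBP, Complex.ofReal_div]
        ring
end
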